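/- Let A be an m × n matrix with rational entries that is totally unimodular, let b ∈ ℚ^m have all entries integer, and let c ∈ ℚ^n. Consider the linear program of maximizing cᵀx over the polyhedron P = { x ∈ ℚ^n : A x ≤ b and x ≥ 0 (componentwise) }. If the maximum of cᵀx over P is attained at some point x* ∈ P, then there exists x ∈ P with all entries integer such that cᵀx = cᵀx*, i.e., the linear program has an integer optimal solution. -/

import Mathlib

open scoped Matrix

lemma det_isInt {k : ℕ} (M : Matrix (Fin k) (Fin k) ℚ)
    (h : ∀ i j, ∃ z : ℤ, M i j = (z : ℚ)) : ∃ z : ℤ, M.det = (z : ℚ) := by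
  choose N hN using h
  have hM : M = ((Int.castRingHom ℚ).mapMatrix (Matrix.of N)) := by
    ext i j; simp [hN i j]
  refine ⟨(Matrix.of N).det, ?_⟩
  rw [hM, ← RingHom.map_det (Int.castRingHom ℚ)]
  rfl

/-- A matrix with linearly independent columns has an invertible square row-submatrix. -/
lemma exists_rows_det_ne_zero {ι : Type} [Fintype ι] [DecidableEq ι] {r : ℕ}
    (E : Matrix ι (Fin r) ℚ) (hE : LinearIndependent ℚ (fun j => Eᵀ j)) :
    ∃ ρ : Fin r → ι, Function.Injective ρ ∧ (E.submatrix ρ id).det ≠ 0 := by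
  classical
  have hrank : E.rank = r := by
    have h1 := E.rank_eq_finrank_span_cols
    have h2 := finrank_span_eq_card (R := ℚ) hE
    simp only [Fintype.card_fin] at h2
    rw [h1]
    exact h2
  have hrow : Module.finrank ℚ (Submodule.span ℚ (Set.range (fun i => E i))) = r := by
    have := E.rank_eq_finrank_span_row
    rw [hrank] at this; exact this.symm
  obtain ⟨b, hbsub, hbspan, hbind⟩ := exists_linearIndependent ℚ (Set.range (fun i => E i))
  have hbfin : b.Finite := Set.Finite.subset (Set.finite_range _) hbsub
  haveI : Fintype b := hbfin.fintype
  have hbcard : b.toFinset.card = r := by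
    rw [← finrank_span_set_eq_card (R := ℚ) hbind, hbspan, hrow]
  -- enumerate b by Fin r
  have hcard : Fintype.card b = r := by rwa [← Set.toFinset_card]
  let e : Fin r ≃ b := (Fintype.equivFinOfCardEq hcard).symm
  -- choose row indices
  have hchoice : ∀ l : Fin r, ∃ i : ι, E i = (e l : Fin r → ℚ) := by
    intro l
    have := hbsub (e l).2
    obtain ⟨i, hi⟩ := this
    exact ⟨i, hi⟩
  choose ρ hρ using hchoice
  have hρinj : Function.Injective ρ := by
    intro l l' h
    have : (e l : Fin r → ℚ) = (e l' : Fin r → ℚ) := by rw [← hρ l, ← hρ l', h]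
    exact e.injective (Subtype.ext this)
  refine ⟨ρ, hρinj, ?_⟩
  have hrows : LinearIndependent ℚ (fun l => (E.submatrix ρ id) l) := by
    have : (fun l => (E.submatrix ρ id) l) = (fun l : Fin r => ((e l : Fin r → ℚ))) := by
      funext l; ext j; simp [Matrix.submatrix_apply, ← hρ l]
    rw [this]
    exact hbind.comp (fun l => e l) (fun a a' h => e.injective h)
  have := Matrix.linearIndependent_rows_iff_isUnit.mp hrows
  have hdet := (Matrix.isUnit_iff_isUnit_det _).mp this
  exact IsUnit.ne_zero hdet

lemma exists_int_solution' {ι : Type} [Fintype ι] [DecidableEq ι] {n : ℕ}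
    (E : Matrix ι (Fin n) ℚ) (hE : E.IsTotallyUnimodular)
    (f : ι → ℚ) (hf : ∀ i, ∃ z : ℤ, f i = (z : ℚ))
    (y : Fin n → ℚ) (hy : E.mulVec y = f)
    {r : ℕ} (γ : Fin r → Fin n) (hγinj : Function.Injective γ)
    (ρ : Fin r → ι) (hρinj : Function.Injective ρ)
    (B : Matrix (Fin r) (Fin r) ℚ) (hB : B = E.submatrix ρ γ)
    (hBtu : B.IsTotallyUnimodular)
    (hdet1 : B.det = 1 ∨ B.det = -1)
    (w : Fin r → ℚ) (hE₁w : (E.submatrix id γ).mulVec w = f) :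
    ∃ x : Fin n → ℚ, (∀ j, ∃ k : ℤ, x j = (k : ℚ)) ∧ E.mulVec x = f := by
  classical
  have hdetu : IsUnit B.det := by rcases hdet1 with h | h <;> rw [h] <;> simp
  have hBmv : B.mulVec w = f ∘ ρ := by
    ext l
    have := congrFun hE₁w (ρ l)
    simp only [Matrix.mulVec, dotProduct, Matrix.submatrix_apply, id] at this ⊢
    rw [hB]
    simpa [Matrix.submatrix_apply] using this
  -- cramer B (f∘ρ) = det B • w
  have hcram : Matrix.cramer B (f ∘ ρ) = B.det • w := by
    apply Matrix.mulVec_injective_iff_isUnit.mpr ((Matrix.isUnit_iff_isUnit_det B).mpr hdetu)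
    rw [Matrix.mulVec_cramer, Matrix.mulVec_smul, hBmv]
  -- cramer entries are integers
  have hcint : ∀ l, ∃ z : ℤ, Matrix.cramer B (f ∘ ρ) l = (z : ℚ) := by
    intro l
    rw [Matrix.cramer_apply]
    apply det_isInt
    intro i j
    by_cases hj : j = l
    · subst hj; rw [Matrix.updateCol_self]; exact hf (ρ i)
    · rw [Matrix.updateCol_ne hj]
      obtain ⟨s, hs⟩ := hBtu.apply i j
      rcases s with _ | _ | _
      · exact ⟨0, by rw [← hs]; simp⟩
      · exact ⟨-1, by rw [← hs]; simp⟩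
      · exact ⟨1, by rw [← hs]; simp⟩
  have hwint : ∀ l, ∃ z : ℤ, w l = (z : ℚ) := by
    intro l
    obtain ⟨z, hz⟩ := hcint l
    have := congrFun hcram l
    rcases hdet1 with h | h
    · exact ⟨z, by rw [h] at this; simpa [hz] using this.symm⟩
    · exact ⟨-z, by rw [h] at this; simp at this; push_cast; rw [← hz, this]; ring⟩
  choose kw hkw using hwint
  -- assemble x
  refine ⟨fun j => ∑ l, if γ l = j then w l else 0, ?_, ?_⟩
  · intro j
    refine ⟨∑ l, if γ l = j then kw l else 0, ?_⟩
    push_cast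
    exact Finset.sum_congr rfl fun l _ => by split <;> simp [hkw]
  · ext i
    rw [← hE₁w]
    simp only [Matrix.mulVec, dotProduct, Matrix.submatrix_apply, id]
    rw [Finset.sum_congr rfl (fun j _ => Finset.mul_sum _ _ _), Finset.sum_comm]
    apply Finset.sum_congr rfl
    intro l _
    simp only [mul_ite, mul_zero, Finset.sum_ite_eq, Finset.mem_univ, if_true]

/-- A solvable TU equality system with integer right-hand side has an integer solution. -/
lemma exists_int_solution {ι : Type} [Fintype ι] [DecidableEq ι] {n : ℕ}
    (E : Matrix ι (Fin n) ℚ) (hE : E.IsTotallyUnimodular)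
    (f : ι → ℚ) (hf : ∀ i, ∃ z : ℤ, f i = (z : ℚ))
    (y : Fin n → ℚ) (hy : E.mulVec y = f) :
    ∃ x : Fin n → ℚ, (∀ j, ∃ k : ℤ, x j = (k : ℚ)) ∧ E.mulVec x = f := by
  classical
  -- f is in the span of the columns of E
  have hfspan : f ∈ Submodule.span ℚ (Set.range Eᵀ) := by
    rw [show Set.range Eᵀ = Set.range E.col from rfl, ← Matrix.range_mulVecLin]
    exact ⟨y, hy⟩
  obtain ⟨b, hbsub, hbspan, hbind⟩ := exists_linearIndependent ℚ (Set.range Eᵀ)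
  have hbfin : b.Finite := Set.Finite.subset (Set.finite_range _) hbsub
  haveI : Fintype b := hbfin.fintype
  set r := Fintype.card b with hr
  let e : Fin r ≃ b := (Fintype.equivFin b).symm
  have hchoice : ∀ l : Fin r, ∃ j : Fin n, Eᵀ j = (e l : ι → ℚ) := fun l => hbsub (e l).2
  choose γ hγ using hchoice
  have hγinj : Function.Injective γ := by
    intro l l' h
    have : (e l : ι → ℚ) = (e l' : ι → ℚ) := by rw [← hγ l, ← hγ l', h]
    exact e.injective (Subtype.ext this)
  -- the submatrix on columns γ
  let E₁ : Matrix ι (Fin r) ℚ := E.submatrix id γ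
  have hcols : (fun l => E₁ᵀ l) = fun l : Fin r => ((e l : ι → ℚ)) := by
    funext l; ext i; simp [E₁, ← hγ l, Matrix.transpose_apply]
  have hE₁ind : LinearIndependent ℚ (fun l => E₁ᵀ l) := by
    rw [hcols]
    exact hbind.comp (fun l => e l) (fun a a' h => e.injective h)
  -- f in span of range of (cols ∘ γ)
  have hrange : Set.range (fun l => E₁ᵀ l) = b := by
    rw [hcols]
    ext v
    constructor
    · rintro ⟨l, rfl⟩; exact (e l).2
    · rintro hv; exact ⟨e.symm ⟨v, hv⟩, by simp⟩
  have hf2 : f ∈ Submodule.span ℚ (Set.range (fun l => E₁ᵀ l)) := by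
    rw [hrange, hbspan]; exact hfspan
  obtain ⟨w, hw⟩ := Submodule.mem_span_range_iff_exists_fun ℚ |>.mp hf2
  -- E₁ *ᵥ w = f
  have hE₁w : E₁.mulVec w = f := by
    ext i
    rw [← hw]
    simp [Matrix.mulVec, dotProduct, E₁, mul_comm]
  -- pick rows
  obtain ⟨ρ, hρinj, hdet⟩ := exists_rows_det_ne_zero E₁ hE₁ind
  set B : Matrix (Fin r) (Fin r) ℚ := E₁.submatrix ρ id with hB
  have hBtu : B.IsTotallyUnimodular := (hE.submatrix ρ γ : _)
  -- det B = ±1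
  have hdet1 : B.det = 1 ∨ B.det = -1 := by
    obtain ⟨s, hs⟩ := hBtu r id id Function.injective_id Function.injective_id
    rw [Matrix.submatrix_id_id] at hs
    rcases s with _ | _ | _
    · exfalso; apply hdet; rw [← hs]; rfl
    · right; rw [← hs]; rfl
    · left; rw [← hs]; rfl
  exact exists_int_solution' E hE f hf y hy γ hγinj ρ hρinj B rfl hBtu hdet1 w hE₁w


/-- TU polyhedron with integer rhs: any feasible point can be replaced by an integer
feasible point whose tight constraints include the original tight constraints. -/
lemma exists_int_feasible {ι : Type} [Fintype ι] [DecidableEq ι] {n : ℕ}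
    (M : Matrix ι (Fin n) ℚ) (hM : M.IsTotallyUnimodular)
    (d : ι → ℚ) (hd : ∀ i, ∃ z : ℤ, d i = (z : ℚ))
    (y : Fin n → ℚ) (hy : M.mulVec y ≤ d) :
    ∃ x : Fin n → ℚ, (∀ j, ∃ k : ℤ, x j = (k : ℚ)) ∧ M.mulVec x ≤ d ∧
      ∀ i, M.mulVec y i = d i → M.mulVec x i = d i := by
  classical
  set T : (Fin n → ℚ) → Finset ι :=
    fun z => Finset.univ.filter (fun i => M.mulVec z i = d i) with hT
  set S : Set (Fin n → ℚ) := {z | M.mulVec z ≤ d ∧ T y ⊆ T z} with hS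
  have hyS : y ∈ S := ⟨hy, subset_rfl⟩
  -- pick z₀ ∈ S with maximal tight set
  set K : Set ℕ := (fun z => (T z).card) '' S with hK
  have hKne : K.Nonempty := ⟨_, y, hyS, rfl⟩
  have hKbdd : BddAbove K := by
    refine ⟨Fintype.card ι, ?_⟩
    rintro k ⟨z, _, rfl⟩
    exact Finset.card_le_card (Finset.subset_univ _) |>.trans (by simp)
  obtain ⟨z₀, hz₀S, hz₀card⟩ := Nat.sSup_mem hKne hKbdd
  have hmaxcard : ∀ z ∈ S, (T z).card ≤ (T z₀).card := by
    intro z hz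
    have h1 : (T z₀).card = sSup K := hz₀card
    rw [h1]
    exact le_csSup hKbdd ⟨z, hz, rfl⟩
  -- key claim: equality on T z₀ forces feasibility
  have hclaim : ∀ x : Fin n → ℚ, (∀ i ∈ T z₀, M.mulVec x i = d i) → M.mulVec x ≤ d := by
    intro x hx
    by_contra hcon
    rw [Pi.le_def] at hcon
    push_neg at hcon
    obtain ⟨i₀, hi₀⟩ := hcon
    set V : Finset ι := Finset.univ.filter (fun i => d i < M.mulVec x i) with hV
    have hi₀V : i₀ ∈ V := by simp [hV, hi₀]
    have hVT : ∀ i ∈ V, i ∉ T z₀ := by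
      intro i hi hiT
      rw [Finset.mem_filter] at hi hiT
      exact absurd (hx i (by simp [hT, hiT.2])) (ne_of_gt hi.2)
    set g : ι → ℚ := fun i => (d i - M.mulVec z₀ i) / (M.mulVec x i - M.mulVec z₀ i) with hg
    obtain ⟨i₁, hi₁V, hi₁min⟩ := Finset.exists_min_image V g ⟨i₀, hi₀V⟩
    set t : ℚ := g i₁ with ht
    have hzle : ∀ i, M.mulVec z₀ i ≤ d i := hz₀S.1
    have hdenpos : ∀ i ∈ V, 0 < M.mulVec x i - M.mulVec z₀ i := by
      intro i hi
      rw [Finset.mem_filter] at hi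
      have := hzle i
      linarith [hi.2]
    have ht0 : 0 ≤ t := by
      apply div_nonneg
      · linarith [hzle i₁]
      · linarith [hdenpos i₁ hi₁V]
    have ht1 : t < 1 := by
      rw [ht, hg, div_lt_one (hdenpos i₁ hi₁V)]
      have : d i₁ < M.mulVec x i₁ := (Finset.mem_filter.mp hi₁V).2
      linarith
    set w : Fin n → ℚ := z₀ + t • (x - z₀) with hw
    have hMw : ∀ i, M.mulVec w i = M.mulVec z₀ i + t * (M.mulVec x i - M.mulVec z₀ i) := by
      intro i
      rw [hw, Matrix.mulVec_add, Matrix.mulVec_smul, Matrix.mulVec_sub]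
      simp [smul_eq_mul]
    have hwfeas : M.mulVec w ≤ d := by
      intro i
      rw [hMw i]
      by_cases hiV : i ∈ V
      · have := hi₁min i hiV
        have hden := hdenpos i hiV
        have : t * (M.mulVec x i - M.mulVec z₀ i) ≤ d i - M.mulVec z₀ i := by
          rw [ht]
          calc g i₁ * (M.mulVec x i - M.mulVec z₀ i) ≤ g i * (M.mulVec x i - M.mulVec z₀ i) := by
                apply mul_le_mul_of_nonneg_right (hi₁min i hiV) (le_of_lt hden)
            _ = d i - M.mulVec z₀ i := by rw [hg]; field_simp
        linarith
      · have hxi : M.mulVec x i ≤ d i := by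
          by_contra hc
          exact hiV (by simp [hV]; linarith)
        nlinarith [hzle i, ht0, ht1]
    have hwT : T z₀ ⊆ T w := by
      intro i hi
      have h1 : M.mulVec z₀ i = d i := (Finset.mem_filter.mp hi).2
      have h2 : M.mulVec x i = d i := hx i hi
      simp only [hT, Finset.mem_filter, Finset.mem_univ, true_and]
      rw [hMw i, h1, h2]; ring
    have hi₁T : i₁ ∈ T w := by
      simp only [hT, Finset.mem_filter, Finset.mem_univ, true_and]
      rw [hMw i₁, ht, hg]
      have hden := hdenpos i₁ hi₁V
      field_simp
      ring
    have hwS : w ∈ S := ⟨hwfeas, hz₀S.2.trans hwT⟩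
    have hlt : (T z₀).card < (T w).card :=
      Finset.card_lt_card ⟨hwT, fun hsub => hVT i₁ hi₁V (hsub hi₁T)⟩
    exact absurd (hmaxcard w hwS) (by omega)
  -- solve the equality system on T z₀
  set E : Matrix {i // i ∈ T z₀} (Fin n) ℚ := M.submatrix Subtype.val id with hE
  have hEtu : E.IsTotallyUnimodular := hM.submatrix Subtype.val id
  have hz₀eq : E.mulVec z₀ = fun i => d i.val := by
    ext i
    exact (Finset.mem_filter.mp i.2).2
  obtain ⟨x, hxint, hxeq⟩ := exists_int_solution E hEtu (fun i => d i.val)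
    (fun i => hd i.val) z₀ hz₀eq
  have hxtight : ∀ i ∈ T z₀, M.mulVec x i = d i := by
    intro i hi
    exact congrFun hxeq ⟨i, hi⟩
  refine ⟨x, hxint, hclaim x hxtight, ?_⟩
  intro i hi
  exact hxtight i (hz₀S.2 (by simp [hT, hi]))

lemma perturb_bound (a e di ε : ℚ) (h : a < di) (hε : 0 < ε)
    (hle : ε ≤ (di - a) / (1 + |a - e|)) : a + ε * (a - e) ≤ di := by
  have habs : a - e ≤ |a - e| := le_abs_self _
  have habs0 : 0 ≤ |a - e| := abs_nonneg _
  have h1 : ε * (a - e) ≤ ε * |a - e| := mul_le_mul_of_nonneg_left habs (le_of_lt hε)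
  have h2 : ε * |a - e| ≤ (di - a) / (1 + |a - e|) * |a - e| :=
    mul_le_mul_of_nonneg_right hle habs0
  have h3 : (di - a) / (1 + |a - e|) * |a - e| ≤ di - a := by
    rw [div_mul_eq_mul_div, div_le_iff₀ (by positivity)]
    nlinarith
  linarith

/-- Integrality of linear programs with totally unimodular coefficient matrix:
if the maximum of `cᵀx` over `P = {x : A x ≤ b, x ≥ 0}` is attained, then it is
attained at a point with all entries integer. -/
theorem totallyUnimodular_LP_has_integer_optimum {m n : ℕ}
    (A : Matrix (Fin m) (Fin n) ℚ) (hA : A.IsTotallyUnimodular)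
    (b : Fin m → ℚ) (hb : ∀ i : Fin m, ∃ z : ℤ, b i = (z : ℚ))
    (c : Fin n → ℚ)
    (P : Set (Fin n → ℚ)) (hP : P = {x : Fin n → ℚ | A.mulVec x ≤ b ∧ 0 ≤ x})
    (xstar : Fin n → ℚ) (hxstar : xstar ∈ P)
    (hmax : ∀ x ∈ P, c ⬝ᵥ x ≤ c ⬝ᵥ xstar) :
    ∃ x ∈ P, (∀ j : Fin n, ∃ k : ℤ, x j = (k : ℚ)) ∧ c ⬝ᵥ x = c ⬝ᵥ xstar := by
  classical
  set M : Matrix (Fin m ⊕ Fin n) (Fin n) ℚ :=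
    Matrix.fromRows A (-(1 : Matrix (Fin n) (Fin n) ℚ)) with hM
  set d : Fin m ⊕ Fin n → ℚ := Sum.elim b 0 with hd
  have hMtu : M.IsTotallyUnimodular := by
    apply hA.fromRows_unitlike
    intro _ i
    refine ⟨i, SignType.neg, ?_⟩
    ext j
    by_cases h : i = j <;> simp [Matrix.one_apply, Pi.single_apply, h]
  have hdint : ∀ i, ∃ z : ℤ, d i = (z : ℚ) := by
    rintro (i | j)
    · exact hb i
    · exact ⟨0, by simp [hd]⟩
  -- feasibility translation
  have hfeas : ∀ x : Fin n → ℚ, M.mulVec x ≤ d ↔ (A.mulVec x ≤ b ∧ 0 ≤ x) := by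
    intro x
    have hmv : M.mulVec x = Sum.elim (A.mulVec x) (-x) := by
      rw [hM, Matrix.fromRows_mulVec, Matrix.neg_mulVec, Matrix.one_mulVec]
    constructor
    · intro h
      constructor
      · intro i; have := h (Sum.inl i); rwa [hmv] at this
      · intro j; have := h (Sum.inr j); rw [hmv] at this
        simp only [hd, Sum.elim_inr, Pi.neg_apply, Pi.zero_apply] at this
        simp only [Pi.zero_apply]
        linarith
    · rintro ⟨h1, h2⟩ i
      rw [hmv]
      rcases i with i | j
      · exact h1 i
      · simp only [hd, Sum.elim_inr, Pi.neg_apply, Pi.zero_apply]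
        have := h2 j
        simp only [Pi.zero_apply] at this
        linarith
  have hxsP : A.mulVec xstar ≤ b ∧ 0 ≤ xstar := by rwa [hP] at hxstar
  obtain ⟨x, hxint, hxfeas, hxtight⟩ :=
    exists_int_feasible M hMtu d hdint xstar ((hfeas xstar).mpr hxsP)
  have hxP : x ∈ P := by rw [hP]; exact (hfeas x).mp hxfeas
  refine ⟨x, hxP, hxint, ?_⟩
  have hle : c ⬝ᵥ x ≤ c ⬝ᵥ xstar := hmax x hxP
  -- reverse inequality via perturbation
  set V : Finset (Fin m ⊕ Fin n) :=
    Finset.univ.filter (fun i => M.mulVec xstar i < d i) with hV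
  set g : Fin m ⊕ Fin n → ℚ :=
    fun i => (d i - M.mulVec xstar i) / (1 + |M.mulVec xstar i - M.mulVec x i|) with hg
  set Sε : Finset ℚ := insert 1 (V.image g) with hSε
  have hSne : Sε.Nonempty := ⟨1, Finset.mem_insert_self _ _⟩
  set ε : ℚ := Sε.min' hSne with hε
  have hεpos : 0 < ε := by
    have := Sε.min'_mem hSne
    rw [← hε] at this
    rw [hSε] at this
    rcases Finset.mem_insert.mp this with h | h
    · rw [h]; norm_num
    · obtain ⟨i, hi, hgi⟩ := Finset.mem_image.mp h
      rw [← hgi, hg]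
      apply div_pos
      · have : M.mulVec xstar i < d i := (Finset.mem_filter.mp hi).2
        linarith
      · positivity
  have hεle : ∀ i ∈ V, ε ≤ g i := by
    intro i hi
    exact Sε.min'_le _ (Finset.mem_insert_of_mem (Finset.mem_image_of_mem g hi))
  set u : Fin n → ℚ := xstar + ε • (xstar - x) with hu
  have hMu : ∀ i, M.mulVec u i = M.mulVec xstar i + ε * (M.mulVec xstar i - M.mulVec x i) := by
    intro i
    rw [hu, Matrix.mulVec_add, Matrix.mulVec_smul, Matrix.mulVec_sub]
    simp [smul_eq_mul]
  have hufeas : M.mulVec u ≤ d := by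
    intro i
    rw [hMu i]
    by_cases hiV : i ∈ V
    · have hgap : M.mulVec xstar i < d i := (Finset.mem_filter.mp hiV).2
      have h1 := hεle i hiV
      rw [hg] at h1
      exact perturb_bound _ _ _ _ hgap hεpos h1
    · have heq : M.mulVec xstar i = d i := by
        have hle' := (hfeas xstar).mpr hxsP i
        by_contra hne
        exact hiV (by simp [hV]; exact lt_of_le_of_ne hle' hne)
      have heq2 : M.mulVec x i = d i := hxtight i heq
      rw [heq, heq2]
      simp
  have huP : u ∈ P := by rw [hP]; exact (hfeas u).mp hufeas
  have hcu : c ⬝ᵥ u = c ⬝ᵥ xstar + ε * (c ⬝ᵥ xstar - c ⬝ᵥ x) := by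
    rw [hu]
    rw [dotProduct_add, dotProduct_smul, dotProduct_sub]
    simp [smul_eq_mul]
  have := hmax u huP
  rw [hcu] at this
  have hge : c ⬝ᵥ xstar ≤ c ⬝ᵥ x := by nlinarith
  linarith
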